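/- arXiv:1508.01183 — 4 statements merged into one kernel-verified Lean document; each statement's English description precedes it below -/
import Mathlib

section
/- For q, q' > 0 and all n ≥ 3, ∑_{k=3}^{n} (q·k² - (6q - q')·k)·(n!/((n-k)!·2k)) ≤ ((q+q')/2)·e·n·n!, where e = ∑_{m=0}^∞ 1/m!. -/
theorem stmt_8 (q q' : ℝ) (hq : 0 < q) (hq' : 0 < q') (n : ℕ) (hn : 3 ≤ n) :
    ∑ k ∈ Finset.Icc 3 n,
        (q * (k : ℝ) ^ 2 - (6 * q - q') * k) * ((n.factorial : ℝ) / ((n - k).factorial * (2 * k)))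
      ≤ ((q + q') / 2) * Real.exp 1 * n * n.factorial := by
  have hexp : ∑ k ∈ Finset.Icc 3 n, (1 : ℝ) / (n - k).factorial ≤ Real.exp 1 := by
    have heq : ∑ k ∈ Finset.Icc 3 n, (1 : ℝ) / (n - k).factorial
        = ∑ m ∈ Finset.range (n - 2), (1 : ℝ) / m.factorial := by
      apply Finset.sum_nbij' (fun k => n - k) (fun m => n - m)
      · intro k hk; simp only [Finset.mem_Icc] at hk; simp only [Finset.mem_range]; omega
      · intro m hm; simp only [Finset.mem_range] at hm; simp only [Finset.mem_Icc]; omega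
      · intro k hk; simp only [Finset.mem_Icc] at hk; omega
      · intro m hm; simp only [Finset.mem_range] at hm; omega
      · intro k hk; rfl
    rw [heq]
    have := Real.sum_le_exp_of_nonneg (x := 1) zero_le_one (n - 2)
    simpa using this
  calc ∑ k ∈ Finset.Icc 3 n,
        (q * (k : ℝ) ^ 2 - (6 * q - q') * k) * ((n.factorial : ℝ) / ((n - k).factorial * (2 * k)))
      ≤ ∑ k ∈ Finset.Icc 3 n,
        ((q + q') / 2 * n * n.factorial) * ((1 : ℝ) / (n - k).factorial) := by
        apply Finset.sum_le_sum
        intro k hk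
        simp only [Finset.mem_Icc] at hk
        obtain ⟨hk3, hkn⟩ := hk
        have hK : (3 : ℝ) ≤ (k : ℝ) := by exact_mod_cast hk3
        have hKn : (k : ℝ) ≤ n := by exact_mod_cast hkn
        have hF : (0 : ℝ) < (n - k).factorial := by positivity
        have hN : (0 : ℝ) < n.factorial := by positivity
        have hKpos : (0 : ℝ) < k := by linarith
        rw [← mul_div_assoc, mul_one_div, div_le_div_iff₀ (mul_pos hF (by positivity)) hF]
        have hP : (0:ℝ) < (n - k).factorial * n.factorial := mul_pos hF hN
        nlinarith [mul_nonneg (mul_nonneg (mul_nonneg hq.le hKpos.le) (by linarith : (0:ℝ) ≤ (n:ℝ) - k)) hP.le,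
          mul_nonneg (mul_nonneg (mul_nonneg hq'.le hKpos.le) (by linarith : (0:ℝ) ≤ (n:ℝ) - 1)) hP.le,
          mul_nonneg (mul_nonneg hq.le hKpos.le) hP.le]
    _ ≤ ((q + q') / 2 * n * n.factorial) * Real.exp 1 := by
        rw [← Finset.mul_sum]
        apply mul_le_mul_of_nonneg_left hexp (by positivity)
    _ = ((q + q') / 2) * Real.exp 1 * n * n.factorial := by ring
end

section
/- For 0 < p < 1 and n ≥ 6, the sum S(n,p) = ∑_{i=6}^{n} p^i·(n!/(n-i)!)·(i-5) satisfies p^n·(n-5)·n! ≤ S(n,p) ≤ e^{1/p}·p^n·n·n!. -/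
theorem stmt_9 (p : ℝ) (hp0 : 0 < p) (hp1 : p < 1) (n : ℕ) (hn : 6 ≤ n) :
    p ^ n * ((n : ℝ) - 5) * n.factorial
        ≤ ∑ i ∈ Finset.Icc 6 n, p ^ i * (n.descFactorial i : ℝ) * ((i : ℝ) - 5) ∧
      ∑ i ∈ Finset.Icc 6 n, p ^ i * (n.descFactorial i : ℝ) * ((i : ℝ) - 5)
        ≤ Real.exp (1 / p) * p ^ n * n * n.factorial := by
  have hnonneg : ∀ i ∈ Finset.Icc 6 n, 0 ≤ p ^ i * (n.descFactorial i : ℝ) * ((i : ℝ) - 5) := by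
    intro i hi
    obtain ⟨h6, hin⟩ := Finset.mem_Icc.mp hi
    have h5 : (5 : ℝ) ≤ i := by exact_mod_cast (by omega : 5 ≤ i)
    have := sub_nonneg.mpr h5
    positivity
  constructor
  · have hIn : n ∈ Finset.Icc 6 n := Finset.mem_Icc.mpr ⟨hn, le_refl n⟩
    have := Finset.single_le_sum hnonneg hIn
    simpa [Nat.descFactorial_self, mul_comm, mul_left_comm, mul_assoc] using this
  · have hsum := Real.sum_le_exp_of_nonneg (x := 1 / p) (by positivity) (n + 1)
    calc ∑ i ∈ Finset.Icc 6 n, p ^ i * (n.descFactorial i : ℝ) * ((i : ℝ) - 5)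
        ≤ ∑ i ∈ Finset.Icc 6 n,
            (p ^ n * n * n.factorial) * ((1 / p) ^ (n - i) / (n - i).factorial) := by
          apply Finset.sum_le_sum
          intro i hi
          obtain ⟨h6, hin⟩ := Finset.mem_Icc.mp hi
          have hfac : ((n - i).factorial : ℝ) * (n.descFactorial i : ℝ) = n.factorial := by
            exact_mod_cast congrArg (Nat.cast : ℕ → ℝ) (Nat.factorial_mul_descFactorial hin)
          have hkey : (p ^ n * n * n.factorial) * ((1 / p) ^ (n - i) / (n - i).factorial)
              = p ^ i * (n.descFactorial i : ℝ) * n := by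
            have hpow : p ^ i * p ^ (n - i) = p ^ n := by
              rw [← pow_add]; congr 1; omega
            have hfne : ((n - i).factorial : ℝ) ≠ 0 := by positivity
            field_simp
            rw [← hfac]
            rw [← hpow]
            have hp' : p ^ (n - i) * p⁻¹ ^ (n - i) = 1 := by
              rw [← mul_pow, mul_inv_cancel₀ hp0.ne', one_pow]
            linear_combination (p ^ i * ((n - i).factorial : ℝ) * (n.descFactorial i : ℝ)) * hp'
          rw [hkey]
          have h1 : ((i : ℝ) - 5) ≤ n := by
            have : (i : ℝ) ≤ n := by exact_mod_cast hin
            linarith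
          have h2 : (0:ℝ) ≤ p ^ i * (n.descFactorial i : ℝ) := by positivity
          nlinarith [h2, h1, mul_le_mul_of_nonneg_left h1 h2]
      _ = (p ^ n * n * n.factorial) *
            ∑ i ∈ Finset.Icc 6 n, ((1 / p) ^ (n - i) / (n - i).factorial) := by
          rw [Finset.mul_sum]
      _ ≤ (p ^ n * n * n.factorial) *
            ∑ i ∈ Finset.range (n + 1), ((1 / p) ^ (n - i) / (n - i).factorial) := by
          have hsub : ∑ i ∈ Finset.Icc 6 n, ((1 / p) ^ (n - i) / ((n - i).factorial : ℝ))
              ≤ ∑ i ∈ Finset.range (n + 1), ((1 / p) ^ (n - i) / ((n - i).factorial : ℝ)) := by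
            apply Finset.sum_le_sum_of_subset_of_nonneg
            · intro i hi
              obtain ⟨_, hin⟩ := Finset.mem_Icc.mp hi
              exact Finset.mem_range.mpr (by omega)
            · intro i _ _; positivity
          exact mul_le_mul_of_nonneg_left hsub (by positivity)
      _ = (p ^ n * n * n.factorial) *
            ∑ k ∈ Finset.range (n + 1), ((1 / p) ^ k / k.factorial) := by
          congr 1
          have := Finset.sum_range_reflect (fun k => (1 / p) ^ k / (k.factorial : ℝ)) (n + 1)
          simpa using this
      _ ≤ (p ^ n * n * n.factorial) * Real.exp (1 / p) :=
          mul_le_mul_of_nonneg_left hsum (by positivity)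
      _ = Real.exp (1 / p) * p ^ n * n * n.factorial := by ring
end

section
/- For 0 < p < 1 and n ≥ 10, S(n,p) = ∑_{i=6}^{n} p^i·(n!/(n-i)!)·(i-5) satisfies (1/2)·p^n·n·n! ≤ S(n,p) ≤ e^{1/p}·p^n·n·n!; in particular S(n,p) = Θ(p^n·n·n!) as n → ∞ for fixed p. -/
theorem stmt_10 (p : ℝ) (hp0 : 0 < p) (hp1 : p < 1) (n : ℕ) (hn : 10 ≤ n) :
    (1 / 2) * p ^ n * n * n.factorial
        ≤ ∑ i ∈ Finset.Icc 6 n, p ^ i * (n.descFactorial i : ℝ) * ((i : ℝ) - 5) ∧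
      ∑ i ∈ Finset.Icc 6 n, p ^ i * (n.descFactorial i : ℝ) * ((i : ℝ) - 5)
        ≤ Real.exp (1 / p) * p ^ n * n * n.factorial := by
  have hterm_nonneg : ∀ i ∈ Finset.Icc 6 n,
      0 ≤ p ^ i * (n.descFactorial i : ℝ) * ((i : ℝ) - 5) := by
    intro i hi
    simp only [Finset.mem_Icc] at hi
    have h5 : (5:ℝ) ≤ i := by exact_mod_cast (by omega : (5:ℕ) ≤ i)
    have : (0:ℝ) ≤ p ^ i * (n.descFactorial i : ℝ) := by positivity
    nlinarith
  constructor
  · -- lower bound: the i = n term alone suffices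
    have hmem : n ∈ Finset.Icc 6 n := Finset.mem_Icc.mpr ⟨by omega, le_refl n⟩
    have h1 := Finset.single_le_sum hterm_nonneg hmem
    have hdesc : (n.descFactorial n : ℝ) = n.factorial := by
      rw [Nat.descFactorial_self]
    calc (1 / 2) * p ^ n * n * n.factorial
        ≤ p ^ n * (n.descFactorial n : ℝ) * ((n : ℝ) - 5) := by
          rw [hdesc]
          have h5 : (n : ℝ) / 2 ≤ (n : ℝ) - 5 := by
            have : (10 : ℝ) ≤ n := by exact_mod_cast hn
            linarith
          have hfac : (0:ℝ) < n.factorial := by positivity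
          have hpn : (0:ℝ) < p ^ n := by positivity
          nlinarith [mul_pos hpn hfac]
      _ ≤ _ := h1
  · -- upper bound
    have hub : ∑ i ∈ Finset.Icc 6 n, p ^ i * (n.descFactorial i : ℝ) * ((i : ℝ) - 5)
        ≤ ∑ i ∈ Finset.range (n + 1), p ^ i * (n.descFactorial i : ℝ) * n := by
      have hsub : ∑ i ∈ Finset.Icc 6 n, p ^ i * (n.descFactorial i : ℝ) * ((i : ℝ) - 5)
          ≤ ∑ i ∈ Finset.Icc 6 n, p ^ i * (n.descFactorial i : ℝ) * n := by
        apply Finset.sum_le_sum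
        intro i hi
        simp only [Finset.mem_Icc] at hi
        have h1 : (i : ℝ) - 5 ≤ n := by
          have : (i:ℝ) ≤ n := by exact_mod_cast hi.2
          linarith
        have : (0:ℝ) ≤ p ^ i * (n.descFactorial i : ℝ) := by positivity
        exact mul_le_mul_of_nonneg_left h1 this
      refine hsub.trans (Finset.sum_le_sum_of_subset_of_nonneg
        (fun i hi => Finset.mem_range.mpr (by simp only [Finset.mem_Icc] at hi; omega)) ?_)
      intro i _ _
      have : (0:ℝ) ≤ n := Nat.cast_nonneg n
      positivity
    have hre : ∑ i ∈ Finset.range (n + 1), p ^ i * (n.descFactorial i : ℝ) * n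
        = ∑ k ∈ Finset.range (n + 1),
            p ^ n * (n : ℝ) * n.factorial * ((1 / p) ^ k / k.factorial) := by
      rw [← Finset.sum_range_reflect]
      apply Finset.sum_congr rfl
      intro k hk
      simp only [Finset.mem_range] at hk
      have hk' : k ≤ n := by omega
      have h1 : n + 1 - 1 - k = n - k := by omega
      rw [h1]
      have hdesc : (k.factorial : ℝ) * (n.descFactorial (n - k) : ℝ) = n.factorial := by
        rw [← Nat.cast_mul]
        have := Nat.factorial_mul_descFactorial (show n - k ≤ n by omega)
        rw [show n - (n - k) = k by omega] at this
        exact_mod_cast this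
      have hkf : (0:ℝ) < (k.factorial : ℝ) := by positivity
      have hp' : p ≠ 0 := ne_of_gt hp0
      field_simp
      have hpn : p ^ n = p ^ (n - k) * p ^ k := by rw [← pow_add, Nat.sub_add_cancel hk']
      have hpk : p ^ k ≠ 0 := pow_ne_zero _ hp'
      rw [mul_assoc, mul_comm (n.descFactorial (n - k) : ℝ), hdesc, hpn, one_div, inv_pow,
        show p ^ (n - k) * p ^ k * (n.factorial : ℝ) * (p ^ k)⁻¹
          = p ^ (n - k) * n.factorial * (p ^ k * (p ^ k)⁻¹) by ring, mul_inv_cancel₀ hpk, mul_one]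
    rw [hre, ← Finset.mul_sum] at hub
    apply hub.trans
    have hexp := Real.sum_le_exp_of_nonneg (le_of_lt (by positivity : (0:ℝ) < 1 / p)) (n + 1)
    have hpos : (0:ℝ) ≤ p ^ n * (n : ℝ) * n.factorial := by positivity
    calc p ^ n * (n : ℝ) * n.factorial * ∑ k ∈ Finset.range (n + 1), (1 / p) ^ k / k.factorial
        ≤ p ^ n * (n : ℝ) * n.factorial * Real.exp (1 / p) :=
          mul_le_mul_of_nonneg_left hexp hpos
      _ = Real.exp (1 / p) * p ^ n * n * n.factorial := by ring
end

section
/- Let q > 0 and n ≥ 3. Then E := (q/16)·∑_{k=3}^{n-3} ∑_{l=3}^{n-k} n!/(n-k-l)! satisfies E = (q/16)·∑_{i=6}^{n} (n!/(n-i)!)·(i-5), and hence (q/16)·(n-5)·n! ≤ E ≤ (q·e/16)·n·n! for n ≥ 6. -/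
open Finset

lemma key_sum (n : ℕ) :
    ∑ k ∈ Finset.Icc 3 (n - 3), ∑ l ∈ Finset.Icc 3 (n - k),
        (n.descFactorial (k + l) : ℝ)
      = ∑ i ∈ Finset.Icc 6 n, (n.descFactorial i : ℝ) * ((i : ℝ) - 5) := by
  have h1 : ∑ k ∈ Finset.Icc 3 (n - 3), ∑ l ∈ Finset.Icc 3 (n - k),
        (n.descFactorial (k + l) : ℝ)
      = ∑ i ∈ Finset.Icc 6 n, ∑ k ∈ Finset.Icc 3 (i - 3),
        (n.descFactorial i : ℝ) := by
    rw [Finset.sum_sigma' (Finset.Icc 3 (n-3)) (fun k => Finset.Icc 3 (n-k))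
      (fun k l => ((n.descFactorial (k+l) : ℝ))),
      Finset.sum_sigma' (Finset.Icc 6 n) (fun i => Finset.Icc 3 (i-3))
      (fun i _k => ((n.descFactorial i : ℝ)))]
    refine Finset.sum_nbij' (fun a => ⟨a.1 + a.2, a.1⟩) (fun b => ⟨b.2, b.1 - b.2⟩) ?_ ?_ ?_ ?_ ?_
    · rintro ⟨k, l⟩ h
      simp only [Finset.mem_sigma, Finset.mem_Icc] at h ⊢
      omega
    · rintro ⟨i, k⟩ h
      simp only [Finset.mem_sigma, Finset.mem_Icc] at h ⊢
      omega
    · rintro ⟨k, l⟩ h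
      simp only [Finset.mem_sigma, Finset.mem_Icc] at h
      simp only [Sigma.mk.inj_iff, heq_eq_eq, true_and, and_true]
      omega
    · rintro ⟨i, k⟩ h
      simp only [Finset.mem_sigma, Finset.mem_Icc] at h
      simp only [Sigma.mk.inj_iff, heq_eq_eq, true_and, and_true]
      omega
    · rintro ⟨k, l⟩ h
      rfl
  rw [h1]
  refine Finset.sum_congr rfl fun i hi => ?_
  simp only [Finset.mem_Icc] at hi
  rw [Finset.sum_const, Nat.card_Icc]
  have : i - 3 + 1 - 3 = i - 5 := by omega
  rw [this, nsmul_eq_mul, mul_comm]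
  congr 1
  push_cast [Nat.cast_sub (by omega : 5 ≤ i)]
  ring

theorem stmt_18 (q : ℝ) (hq : 0 < q) (n : ℕ) (hn : 3 ≤ n) :
    (q / 16) * ∑ k ∈ Finset.Icc 3 (n - 3), ∑ l ∈ Finset.Icc 3 (n - k),
        (n.descFactorial (k + l) : ℝ)
      = (q / 16) * ∑ i ∈ Finset.Icc 6 n, (n.descFactorial i : ℝ) * ((i : ℝ) - 5) ∧
    (6 ≤ n →
      (q / 16) * ((n : ℝ) - 5) * n.factorial
          ≤ (q / 16) * ∑ k ∈ Finset.Icc 3 (n - 3), ∑ l ∈ Finset.Icc 3 (n - k),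
              (n.descFactorial (k + l) : ℝ) ∧
        (q / 16) * ∑ k ∈ Finset.Icc 3 (n - 3), ∑ l ∈ Finset.Icc 3 (n - k),
            (n.descFactorial (k + l) : ℝ)
          ≤ (q * Real.exp 1 / 16) * n * n.factorial) := by
  have hkey := key_sum n
  refine ⟨by rw [hkey], fun h6 => ?_⟩
  rw [hkey]
  have hq16 : (0:ℝ) < q / 16 := by linarith
  constructor
  · -- lower bound: single term i = n
    have hterm : ((n:ℝ) - 5) * n.factorial
        ≤ ∑ i ∈ Finset.Icc 6 n, (n.descFactorial i : ℝ) * ((i : ℝ) - 5) := by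
      have hmem : n ∈ Finset.Icc 6 n := by simp [h6]
      have := Finset.single_le_sum
        (f := fun i => (n.descFactorial i : ℝ) * ((i : ℝ) - 5))
        (fun i hi => by
          simp only [Finset.mem_Icc] at hi
          have : (6:ℝ) ≤ i := by exact_mod_cast hi.1
          exact mul_nonneg (by positivity) (by linarith)) hmem
      simpa [Nat.descFactorial_self, mul_comm] using this
    calc q / 16 * ((n:ℝ) - 5) * n.factorial
        = q / 16 * (((n:ℝ) - 5) * n.factorial) := by ring
      _ ≤ _ := by exact mul_le_mul_of_nonneg_left hterm (le_of_lt hq16)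
  · -- upper bound
    have hstep : ∑ i ∈ Finset.Icc 6 n, (n.descFactorial i : ℝ) * ((i : ℝ) - 5)
        ≤ (n : ℝ) * n.factorial * Real.exp 1 := by
      have h1 : ∑ i ∈ Finset.Icc 6 n, (n.descFactorial i : ℝ) * ((i : ℝ) - 5)
          ≤ ∑ i ∈ Finset.Icc 6 n, ((n.factorial : ℝ) / (n - i).factorial) * n := by
        refine Finset.sum_le_sum fun i hi => ?_
        simp only [Finset.mem_Icc] at hi
        have hd : (n.descFactorial i : ℝ) = (n.factorial : ℝ) / (n - i).factorial := by
          rw [eq_div_iff (by positivity)]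
          exact_mod_cast (mul_comm _ _).trans (Nat.factorial_mul_descFactorial hi.2)
        rw [hd]
        have hin : ((i:ℝ)) ≤ n := by exact_mod_cast hi.2
        have hpos : (0:ℝ) ≤ (n.factorial : ℝ) / (n - i).factorial := by positivity
        nlinarith
      have h2 : ∑ i ∈ Finset.Icc 6 n, ((n.factorial : ℝ) / (n - i).factorial) * n
          = (n : ℝ) * n.factorial * ∑ m ∈ Finset.range (n - 5), (1:ℝ) / m.factorial := by
        rw [Finset.mul_sum]
        refine Finset.sum_nbij' (fun i => n - i) (fun m => n - m) ?_ ?_ ?_ ?_ ?_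
        · intro i hi; simp only [Finset.mem_Icc] at hi; simp only [Finset.mem_range]; omega
        · intro m hm; simp only [Finset.mem_range] at hm; simp only [Finset.mem_Icc]; omega
        · intro i hi; simp only [Finset.mem_Icc] at hi; omega
        · intro m hm; simp only [Finset.mem_range] at hm; omega
        · intro i hi; field_simp
      have h3 : ∑ m ∈ Finset.range (n - 5), (1:ℝ) / m.factorial ≤ Real.exp 1 := by
        have := Real.sum_le_exp_of_nonneg (x := 1) zero_le_one (n - 5)
        simpa using this
      calc ∑ i ∈ Finset.Icc 6 n, (n.descFactorial i : ℝ) * ((i : ℝ) - 5)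
          ≤ (n : ℝ) * n.factorial * ∑ m ∈ Finset.range (n - 5), (1:ℝ) / m.factorial := by
            rw [← h2]; exact h1
        _ ≤ (n : ℝ) * n.factorial * Real.exp 1 := by
            have : (0:ℝ) ≤ (n : ℝ) * n.factorial := by positivity
            exact mul_le_mul_of_nonneg_left h3 this
    calc q / 16 * ∑ i ∈ Finset.Icc 6 n, (n.descFactorial i : ℝ) * ((i : ℝ) - 5)
        ≤ q / 16 * ((n : ℝ) * n.factorial * Real.exp 1) :=
          mul_le_mul_of_nonneg_left hstep (le_of_lt hq16)
      _ = (q * Real.exp 1 / 16) * n * n.factorial := by ring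
end
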